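/- Let τ, R > 0, L ≥ 1, let K be a set of M consecutive integers with M ≥ 2L, and set r = ⌈(R/τ + 3)/2⌉ − 1. Let h : ℝ → ℂ be bounded, measurable, with h(t) = 0 for |t| ≥ R/2, and with ∫_ℝ h(t) e^{−2πi k t/τ} dt ≠ 0 for all k ∈ K. Let g(t) = 1_{[−τ/2,τ/2]}(t) Σ_{k∈K} b_k e^{2πi k t/τ} with all b_k ≠ 0, and let g_r(t) = Σ_{m=−r}^{r} g(t + mτ). Let N ≥ M, T > 0 with (N−1)T < τ, and define samples c[n] = ∫_ℝ conj(g_r(t − nT)) x̃(t) dt for n = 0,…,N−1. Then the samples uniquely determine the finite stream: if two finite streams of pulses built from h, each with at most L pulses, pairwise distinct delays in [0,τ) and nonzero amplitudes, yield identical samples c[n] for n = 0,…,N−1, then their numbers of pulses agree and there is a permutation matching their delay–amplitude pairs; in particular the two signals coincide. -/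

import Mathlib

open MeasureTheory Real


open Polynomial in
lemma vandermonde_kernel {ι : Type*} [DecidableEq ι] (s : Finset ι)
    (z : ι → ℂ) (hz : Set.InjOn z s) (f : ι → ℂ)
    (hsum : ∀ n : ℕ, n < s.card → ∑ i ∈ s, f i * z i ^ n = 0) :
    ∀ i ∈ s, f i = 0 := by
  intro i hi
  set p : ℂ[X] := ∏ j ∈ s.erase i, (X - C (z j)) with hp
  have hdeg : p.natDegree < s.card := by
    have h1 : p.natDegree = (s.erase i).card := by
      rw [hp, natDegree_prod _ _ (fun j _ => X_sub_C_ne_zero _)]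
      simp
    rw [h1, Finset.card_erase_of_mem hi]
    have := Finset.card_pos.2 ⟨i, hi⟩
    omega
  have key : ∑ j ∈ s, f j * p.eval (z j) = 0 := by
    have h2 : ∀ j ∈ s, f j * p.eval (z j)
        = ∑ n ∈ Finset.range s.card, p.coeff n * (f j * z j ^ n) := by
      intro j _
      rw [eval_eq_sum_range' hdeg, Finset.mul_sum]
      exact Finset.sum_congr rfl fun n _ => by ring
    rw [Finset.sum_congr rfl h2, Finset.sum_comm]
    refine Finset.sum_eq_zero fun n hn => ?_
    rw [← Finset.mul_sum, hsum n (Finset.mem_range.1 hn), mul_zero]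
  have h3 : ∑ j ∈ s, f j * p.eval (z j) = f i * p.eval (z i) := by
    refine Finset.sum_eq_single i (fun j hj hji => ?_) (fun hni => absurd hi hni)
    have : p.eval (z j) = 0 := by
      rw [hp, eval_prod]
      exact Finset.prod_eq_zero (Finset.mem_erase.2 ⟨hji, hj⟩) (by simp)
    rw [this, mul_zero]
  have h4 : p.eval (z i) ≠ 0 := by
    rw [hp, eval_prod]
    refine Finset.prod_ne_zero_iff.2 fun j hj => ?_
    simp only [eval_sub, eval_X, eval_C, sub_ne_zero]
    exact fun hzz => (Finset.mem_erase.1 hj).1 (hz hi (Finset.mem_of_mem_erase hj) hzz).symm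
  have := h3 ▸ key
  exact (mul_eq_zero.1 this).resolve_right h4


lemma exp_mul_I_add (x y : ℝ) : Complex.exp ((x:ℂ)*Complex.I) * Complex.exp ((y:ℂ)*Complex.I)
    = Complex.exp (((x+y:ℝ):ℂ)*Complex.I) := by
  rw [← Complex.exp_add]; push_cast; ring_nf

lemma conj_exp_mul_I (x : ℝ) : (starRingEnd ℂ) (Complex.exp ((x:ℂ)*Complex.I))
    = Complex.exp (((-x:ℝ):ℂ)*Complex.I) := by
  rw [← Complex.exp_conj]; congr 1
  simp [map_mul, Complex.conj_I, Complex.conj_ofReal]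

lemma norm_exp_mul_I (x : ℝ) : ‖Complex.exp ((x:ℂ)*Complex.I)‖ = 1 := by
  simpa using Complex.abs_exp_ofReal_mul_I x

lemma pulse_integrable {h : ℝ → ℂ} (hhm : Measurable h) {Ch R : ℝ}
    (hhb : ∀ u, ‖h u‖ ≤ Ch) (hhs : ∀ u : ℝ, R/2 ≤ |u| → h u = 0) :
    Integrable h := by
  have hgint : Integrable ((Set.Icc (-(R/2)) (R/2)).indicator fun _ => Ch) := by
    apply (integrable_indicator_iff measurableSet_Icc).2
    exact integrableOn_const measure_Icc_lt_top.ne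
  refine hgint.mono' hhm.aestronglyMeasurable (Filter.Eventually.of_forall fun u => ?_)
  by_cases hu : u ∈ Set.Icc (-(R/2)) (R/2)
  · rw [Set.indicator_of_mem hu]; exact hhb u
  · rw [Set.indicator_of_notMem hu]
    have hle : R/2 ≤ |u| := by
      simp only [Set.mem_Icc, not_and_or, not_le] at hu
      rcases hu with h' | h' <;> cases abs_cases u <;> linarith [le_abs_self u, neg_abs_le u]
    rw [hhs u hle, norm_zero]

lemma exp_factor_integrable {h : ℝ → ℂ} (hint : Integrable h) (c : ℝ → ℝ)
    (hc : Continuous c) :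
    Integrable (fun u : ℝ => h u * Complex.exp (((c u : ℝ):ℂ) * Complex.I)) := by
  have hm : AEStronglyMeasurable (fun u : ℝ => Complex.exp (((c u : ℝ):ℂ) * Complex.I)) volume :=
    (Complex.continuous_exp.comp ((Complex.continuous_ofReal.comp hc).mul
      continuous_const)).aestronglyMeasurable
  have := hint.mul_bdd hm (c := 1) (Filter.Eventually.of_forall fun u => le_of_eq (norm_exp_mul_I _))
  simpa [mul_comm] using this

lemma gr_eq_sum (τ R : ℝ) (hτ : 0 < τ) (K : Finset ℤ) (r : ℤ)
    (hr : r = ⌈(R / τ + 3) / 2⌉ - 1) (b : ℤ → ℂ) (g gr : ℝ → ℂ)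
    (hg : ∀ u : ℝ, g u = if u ∈ Set.Icc (-(τ / 2)) (τ / 2) then
        ∑ k ∈ K, b k * Complex.exp (2 * π * Complex.I * k * u / τ) else 0)
    (hgr : ∀ u : ℝ, gr u = ∑ m ∈ Finset.Icc (-r) r, g (u + m * τ))
    (w : ℝ) (hw : |w| < τ + R / 2) (hw2 : ∀ m : ℤ, w ≠ τ / 2 + m * τ) :
    gr w = ∑ k ∈ K, b k * Complex.exp (2 * π * Complex.I * k * w / τ) := by
  obtain ⟨hwl, hwr⟩ := abs_lt.1 hw
  set m₀ : ℤ := -⌊w / τ + 1 / 2⌋ with hm₀def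
  have hfl : (⌊w / τ + 1 / 2⌋ : ℝ) ≤ w / τ + 1 / 2 := Int.floor_le _
  have hfl2 : w / τ + 1 / 2 < ⌊w / τ + 1 / 2⌋ + 1 := Int.lt_floor_add_one _
  have e1 : w / τ * τ = w := div_mul_cancel₀ w hτ.ne'
  have hcast : (m₀ : ℝ) = -(⌊w / τ + 1 / 2⌋ : ℝ) := by rw [hm₀def]; push_cast; ring
  have h1 : -(τ / 2) ≤ w + m₀ * τ := by
    have := mul_le_mul_of_nonneg_right hfl hτ.le
    rw [add_mul, e1] at this
    rw [hcast]; nlinarith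
  have h2 : w + m₀ * τ < τ / 2 := by
    have := mul_lt_mul_of_pos_right hfl2 hτ
    rw [add_mul, add_mul, e1] at this
    rw [hcast]; nlinarith
  have h1' : -(τ / 2) < w + m₀ * τ := by
    rcases h1.lt_or_eq with h | h
    · exact h
    · exact absurd (by push_cast; linarith : w = τ / 2 + ((-m₀ - 1 : ℤ) : ℝ) * τ) (hw2 _)
  have hm₀ : |m₀| ≤ r := by
    have habs : |(m₀ : ℝ) * τ| < 3 * τ / 2 + R / 2 := by
      rw [abs_lt]; constructor <;> nlinarith
    have e2 : R / τ * τ = R := div_mul_cancel₀ R hτ.ne'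
    have habs2 : |(m₀ : ℝ)| * τ < 3 * τ / 2 + R / 2 := by
      have : |(m₀ : ℝ)| * τ = |(m₀ : ℝ) * τ| := by rw [abs_mul, abs_of_pos hτ]
      rw [this]; exact habs
    have h5 : ((|m₀| : ℤ) : ℝ) < (R / τ + 3) / 2 := by
      have ecast : ((|m₀| : ℤ) : ℝ) = |(m₀ : ℝ)| := by push_cast [Int.cast_abs]; ring
      rw [ecast]
      nlinarith [abs_nonneg ((m₀:ℝ))]
    have := Int.lt_ceil.2 h5
    omega
  have hmem : m₀ ∈ Finset.Icc (-r) r := Finset.mem_Icc.2 (abs_le.1 hm₀)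
  rw [hgr]
  rw [Finset.sum_eq_single_of_mem m₀ hmem ?_]
  · rw [hg, if_pos (Set.mem_Icc.2 ⟨h1, h2.le⟩)]
    refine Finset.sum_congr rfl fun k _ => ?_
    congr 1
    have harg : 2 * (π:ℂ) * Complex.I * k * ((w:ℂ) + (m₀:ℂ) * (τ:ℂ)) / τ
        = 2 * π * Complex.I * k * w / τ + ((k * m₀ : ℤ) : ℂ) * (2 * π * Complex.I) := by
      have : (τ:ℂ) ≠ 0 := by exact_mod_cast hτ.ne'
      field_simp
      push_cast
      ring
    push_cast
    rw [harg, Complex.exp_add, Complex.exp_int_mul_two_pi_mul_I, mul_one]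
  · intro m _ hm
    rw [hg, if_neg]
    intro hmem'
    obtain ⟨hl, hru⟩ := Set.mem_Icc.1 hmem'
    have hru' : w + m * τ < τ / 2 :=
      lt_of_le_of_ne hru fun he => hw2 (-m) (by push_cast; linarith)
    have h7 : (1:ℝ) ≤ |(m:ℝ) - (m₀:ℝ)| := by
      have : 1 ≤ |m - m₀| := Int.one_le_abs (sub_ne_zero.2 hm)
      calc (1:ℝ) ≤ ((|m - m₀| : ℤ) : ℝ) := by exact_mod_cast this
        _ = |(m:ℝ) - (m₀:ℝ)| := by push_cast [Int.cast_abs]; ring_nf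
    have h6 : |((m:ℝ) - m₀) * τ| < τ := by
      rw [abs_lt]; constructor <;> nlinarith
    have h8 : τ ≤ |((m:ℝ) - m₀) * τ| := by
      rw [abs_mul, abs_of_pos hτ]; nlinarith
    linarith

lemma filter_integral (τ R : ℝ) (hτ : 0 < τ) (K : Finset ℤ) (r : ℤ)
    (hr : r = ⌈(R / τ + 3) / 2⌉ - 1) (b : ℤ → ℂ)
    (h : ℝ → ℂ) (hhm : Measurable h) (Ch : ℝ) (hhb : ∀ u, ‖h u‖ ≤ Ch)
    (hhs : ∀ u : ℝ, R / 2 ≤ |u| → h u = 0)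
    (g gr : ℝ → ℂ)
    (hg : ∀ u : ℝ, g u = if u ∈ Set.Icc (-(τ / 2)) (τ / 2) then
        ∑ k ∈ K, b k * Complex.exp (2 * π * Complex.I * k * u / τ) else 0)
    (hgr : ∀ u : ℝ, gr u = ∑ m ∈ Finset.Icc (-r) r, g (u + m * τ))
    (s : ℝ) (hs : |s| < τ) :
    (∫ u : ℝ, (starRingEnd ℂ) (gr (u + s)) * h u)
      = ∑ k ∈ K, (starRingEnd ℂ) (b k) * Complex.exp (((-(2*π*k*s/τ) : ℝ):ℂ) * Complex.I)
          * (∫ u : ℝ, h u * Complex.exp (-(2 * π * Complex.I * k * u / τ))) := by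
  have hint : Integrable h := pulse_integrable hhm hhb hhs
  have hstepA : (∫ u : ℝ, (starRingEnd ℂ) (gr (u + s)) * h u)
      = ∫ u : ℝ, ∑ k ∈ K, ((starRingEnd ℂ) (b k)
          * Complex.exp (((-(2*π*k*s/τ) : ℝ):ℂ) * Complex.I))
          * (h u * Complex.exp (((-(2*π*k*u/τ) : ℝ):ℂ) * Complex.I)) := by
    refine integral_congr_ae ?_
    have hEnull : volume (Set.range (fun m : ℤ => τ/2 + m*τ - s)) = 0 :=
      (Set.countable_range _).measure_zero _
    filter_upwards [measure_eq_zero_iff_ae_notMem.1 hEnull] with u hu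
    by_cases hzero : h u = 0
    · simp [hzero]
    · have huR : |u| < R / 2 := by
        by_contra hcon
        exact hzero (hhs u (le_of_not_gt hcon))
      have hw : |u + s| < τ + R / 2 := by
        calc |u + s| ≤ |u| + |s| := abs_add_le _ _
          _ < τ + R / 2 := by linarith
      have hw2 : ∀ m : ℤ, u + s ≠ τ / 2 + m * τ := by
        intro m hm
        exact hu ⟨m, by linarith⟩
      rw [gr_eq_sum τ R hτ K r hr b g gr hg hgr (u + s) hw hw2, map_sum, Finset.sum_mul]
      refine Finset.sum_congr rfl fun k _ => ?_
      have e1 : (2 * (π:ℂ) * Complex.I * k * ((u + s : ℝ):ℂ) / τ)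
          = ((2*π*k*(u+s)/τ : ℝ):ℂ) * Complex.I := by push_cast; ring
      rw [map_mul, e1, conj_exp_mul_I]
      have e2 : Complex.exp (((-(2*π*k*(u+s)/τ) : ℝ):ℂ) * Complex.I)
          = Complex.exp (((-(2*π*k*s/τ) : ℝ):ℂ) * Complex.I)
            * Complex.exp (((-(2*π*k*u/τ) : ℝ):ℂ) * Complex.I) := by
        rw [exp_mul_I_add]
        congr 2
        push_cast
        ring
      rw [e2]
      ring
  rw [hstepA]
  have hintk : ∀ k ∈ K, Integrable (fun u : ℝ => ((starRingEnd ℂ) (b k)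
      * Complex.exp (((-(2*π*k*s/τ) : ℝ):ℂ) * Complex.I))
      * (h u * Complex.exp (((-(2*π*k*u/τ) : ℝ):ℂ) * Complex.I))) := by
    intro k _
    exact (exp_factor_integrable hint (fun u => -(2*π*k*u/τ)) (by fun_prop)).const_mul _
  rw [integral_finset_sum K hintk]
  refine Finset.sum_congr rfl fun k _ => ?_
  rw [MeasureTheory.integral_const_mul]
  congr 1
  refine integral_congr_ae (Filter.Eventually.of_forall fun u => ?_)
  congr 1
  congr 1
  push_cast
  ring

lemma exp_mul_I_pow (x : ℝ) (n : ℕ) : Complex.exp ((x:ℂ)*Complex.I) ^ n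
    = Complex.exp (((n*x:ℝ):ℂ)*Complex.I) := by
  rw [← Complex.exp_nat_mul]; push_cast; ring_nf

lemma exp_real_mul_I_inj {x y : ℝ} (hxy : |x - y| < 2*π)
    (hexp : Complex.exp ((x:ℂ) * Complex.I) = Complex.exp ((y:ℂ) * Complex.I)) : x = y := by
  obtain ⟨n, hn⟩ := Complex.exp_eq_exp_iff_exists_int.1 hexp
  have h2 : ((x - y - n * (2*π) : ℝ) : ℂ) * Complex.I = 0 := by push_cast; linear_combination hn
  have h3 : (x - y - n * (2*π) : ℝ) = 0 := by
    have := (mul_eq_zero.1 h2).resolve_right Complex.I_ne_zero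
    exact_mod_cast this
  have hπ : (0:ℝ) < 2*π := by positivity
  have h4 : |(n:ℝ)| * (2*π) < 2*π := by
    have e : |(n:ℝ)| * (2*π) = |(n:ℝ) * (2*π)| := by rw [abs_mul, abs_of_pos hπ]
    have e2 : (n:ℝ) * (2*π) = x - y := by linarith
    rw [e, e2]; exact hxy
  have h5 : |(n:ℝ)| < 1 := by
    nlinarith [abs_nonneg ((n:ℝ))]
  have h6 : n = 0 := by
    have : |n| < 1 := by exact_mod_cast h5
    exact Int.abs_lt_one_iff.mp this
  rw [h6] at h3; push_cast at h3; linarith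


lemma prony_exists (τ : ℝ) (hτ : 0 < τ)
    (M : ℕ) (k₀ : ℤ) (K : Finset ℤ) (hK : K = Finset.Icc k₀ (k₀ + M - 1))
    (L₁ L₂ : ℕ) (hML : L₁ + L₂ ≤ M)
    (t₁ : Fin L₁ → ℝ) (a₁ : Fin L₁ → ℂ) (t₂ : Fin L₂ → ℝ) (a₂ : Fin L₂ → ℂ)
    (ht₁ : ∀ l, t₁ l ∈ Set.Ico 0 τ) (ht₁' : Function.Injective t₁) (ha₁ : ∀ l, a₁ l ≠ 0)
    (ht₂ : ∀ l, t₂ l ∈ Set.Ico 0 τ) (ht₂' : Function.Injective t₂)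
    (hv : ∀ k ∈ K,
      (∑ l, a₁ l * Complex.exp (((-(2*π*k*(t₁ l)/τ) : ℝ):ℂ) * Complex.I))
        = ∑ l, a₂ l * Complex.exp (((-(2*π*k*(t₂ l)/τ) : ℝ):ℂ) * Complex.I)) :
    ∀ l : Fin L₁, ∃ l' : Fin L₂, t₂ l' = t₁ l ∧ a₂ l' = a₁ l := by
  classical
  have hπ : (0:ℝ) < π := pi_pos
  set S : Finset ℝ := Finset.image t₁ Finset.univ ∪ Finset.image t₂ Finset.univ with hSdef
  have hSmem : ∀ t ∈ S, t ∈ Set.Ico 0 τ := by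
    intro t ht
    rcases Finset.mem_union.1 ht with h' | h' <;>
      obtain ⟨l, _, rfl⟩ := Finset.mem_image.1 h'
    · exact ht₁ l
    · exact ht₂ l
  have hScard : S.card ≤ M := by
    calc S.card ≤ (Finset.image t₁ Finset.univ).card + (Finset.image t₂ Finset.univ).card :=
          Finset.card_union_le _ _
      _ ≤ L₁ + L₂ := by
          gcongr <;> exact (Finset.card_image_le).trans (by simp)
      _ ≤ M := hML
  set w : ℝ → ℂ := fun t => Complex.exp (((-(2*π*t/τ) : ℝ):ℂ) * Complex.I) with hwdef
  set f : ℝ → ℂ := fun t => Complex.exp (((-(2*π*k₀*t/τ) : ℝ):ℂ) * Complex.I) *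
      ((∑ l ∈ Finset.univ.filter (fun l => t₁ l = t), a₁ l)
        - ∑ l ∈ Finset.univ.filter (fun l => t₂ l = t), a₂ l) with hfdef
  have hinj : Set.InjOn w S := by
    intro t ht t' ht' heq
    obtain ⟨h0, h1⟩ := hSmem t ht
    obtain ⟨h0', h1'⟩ := hSmem t' ht'
    have hb1 : |(-(2*π*t/τ)) - (-(2*π*t'/τ))| < 2*π := by
      have e : (-(2*π*t/τ)) - (-(2*π*t'/τ)) = (2*π/τ) * (t' - t) := by ring
      have habs : |t' - t| < τ := abs_lt.2 ⟨by linarith, by linarith⟩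
      rw [e, abs_mul, abs_of_pos (by positivity : (0:ℝ) < 2*π/τ)]
      rw [div_mul_eq_mul_div, div_lt_iff₀ hτ]
      nlinarith
    have key := exp_real_mul_I_inj hb1 heq
    have h2 : (2*π/τ) * t = (2*π/τ) * t' := by linear_combination -key
    exact mul_left_cancel₀ (by positivity : (2*π/τ:ℝ) ≠ 0) h2
  have hexpand : ∀ (Lj : ℕ) (tj : Fin Lj → ℝ) (aj : Fin Lj → ℂ),
      (∀ l, tj l ∈ S) → ∀ n : ℕ, ∀ k : ℤ, k = k₀ + n →
      (∑ t ∈ S, (Complex.exp (((-(2*π*k₀*t/τ) : ℝ):ℂ) * Complex.I) *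
          ∑ l ∈ Finset.univ.filter (fun l => tj l = t), aj l) * w t ^ n)
        = ∑ l, aj l * Complex.exp (((-(2*π*k*(tj l)/τ) : ℝ):ℂ) * Complex.I) := by
    intro Lj tj aj hmem n k hk
    rw [← Finset.sum_fiberwise_of_maps_to (fun l _ => hmem l)
      (fun l => aj l * Complex.exp (((-(2*π*k*(tj l)/τ) : ℝ):ℂ) * Complex.I))]
    refine Finset.sum_congr rfl fun t ht => ?_
    have hwt : Complex.exp (((-(2*π*k₀*t/τ) : ℝ):ℂ) * Complex.I) * w t ^ n
        = Complex.exp (((-(2*π*k*t/τ) : ℝ):ℂ) * Complex.I) := by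
      rw [hwdef]
      simp only []
      rw [exp_mul_I_pow, exp_mul_I_add]
      congr 2
      rw [hk]
      push_cast
      ring
    rw [mul_comm (Complex.exp _) _, mul_assoc, hwt, Finset.sum_mul]
    refine Finset.sum_congr rfl fun l hl => ?_
    have : tj l = t := (Finset.mem_filter.1 hl).2
    rw [this]
  have hzero := vandermonde_kernel S w hinj f ?_
  swap
  · intro n hn
    have hnM : n < M := lt_of_lt_of_le hn hScard
    set k : ℤ := k₀ + n with hkdef
    have hkK : k ∈ K := by
      rw [hK, Finset.mem_Icc]
      omega
    have e1 := hexpand L₁ t₁ a₁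
      (fun l => Finset.mem_union_left _ (Finset.mem_image_of_mem _ (Finset.mem_univ l))) n k hkdef
    have e2 := hexpand L₂ t₂ a₂
      (fun l => Finset.mem_union_right _ (Finset.mem_image_of_mem _ (Finset.mem_univ l))) n k hkdef
    calc ∑ t ∈ S, f t * w t ^ n
        = (∑ t ∈ S, (Complex.exp (((-(2*π*k₀*t/τ) : ℝ):ℂ) * Complex.I) *
              ∑ l ∈ Finset.univ.filter (fun l => t₁ l = t), a₁ l) * w t ^ n)
          - ∑ t ∈ S, (Complex.exp (((-(2*π*k₀*t/τ) : ℝ):ℂ) * Complex.I) *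
              ∑ l ∈ Finset.univ.filter (fun l => t₂ l = t), a₂ l) * w t ^ n := by
          rw [← Finset.sum_sub_distrib]
          refine Finset.sum_congr rfl fun t _ => ?_
          rw [hfdef]
          ring
      _ = 0 := by rw [e1, e2, hv k hkK, sub_self]
  intro l
  have htS : t₁ l ∈ S :=
    Finset.mem_union_left _ (Finset.mem_image_of_mem _ (Finset.mem_univ l))
  have h0 := hzero _ htS
  have hsub : (∑ l' ∈ Finset.univ.filter (fun l' => t₁ l' = t₁ l), a₁ l')
      = ∑ l' ∈ Finset.univ.filter (fun l' => t₂ l' = t₁ l), a₂ l' := by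
    rw [hfdef] at h0
    rcases mul_eq_zero.1 h0 with he | hs
    · exact absurd he (Complex.exp_ne_zero _)
    · exact sub_eq_zero.1 hs
  have hfil1 : Finset.univ.filter (fun l' => t₁ l' = t₁ l) = {l} := by
    ext l'
    simp [ht₁'.eq_iff]
  rw [hfil1, Finset.sum_singleton] at hsub
  have hne : (Finset.univ.filter (fun l' => t₂ l' = t₁ l)).Nonempty := by
    by_contra hcon
    rw [Finset.not_nonempty_iff_eq_empty.1 hcon, Finset.sum_empty] at hsub
    exact ha₁ l hsub
  obtain ⟨l', hl'⟩ := hne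
  have hteq : t₂ l' = t₁ l := (Finset.mem_filter.1 hl').2
  have hfil2 : Finset.univ.filter (fun x => t₂ x = t₁ l) = {l'} := by
    ext x
    simp only [Finset.mem_filter, Finset.mem_univ, true_and, Finset.mem_singleton]
    constructor
    · intro hx
      exact ht₂' (hx.trans hteq.symm)
    · intro hx
      rw [hx]
      exact hteq
  rw [hfil2, Finset.sum_singleton] at hsub
  exact ⟨l', hteq, hsub.symm⟩

/-- The finite stream of pulses `x̃(t) = ∑_{l=1}^L a_l h(t − t_l)`. -/
noncomputable def finiteStream (h : ℝ → ℂ) {L : ℕ}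
    (t : Fin L → ℝ) (a : Fin L → ℂ) : ℝ → ℂ :=
  fun u => ∑ l, a l * h (u - t l)

/-- Uniqueness of a finite stream of pulses from `N ≥ M ≥ 2L` uniform samples taken
after filtering with the extended SoS kernel `g_r(t) = ∑_{m=−r}^r g(t + mτ)`, where
`g(t) = 1_{[−τ/2,τ/2]}(t) ∑_{k∈K} b_k e^{2πikt/τ}` with nonzero coefficients,
`r = ⌈(R/τ + 3)/2⌉ − 1`, and `h` is a bounded measurable pulse supported in
`(−R/2, R/2)` whose Fourier transform is nonzero at `2πk/τ` for all `k ∈ K`. -/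
theorem finite_stream_uniquely_determined_by_samples
    (τ R : ℝ) (hτ : 0 < τ) (hR : 0 < R)
    (L : ℕ) (hL : 1 ≤ L)
    (M : ℕ) (hM : 2 * L ≤ M) (k₀ : ℤ) (K : Finset ℤ)
    (hK : K = Finset.Icc k₀ (k₀ + M - 1))
    (r : ℤ) (hr : r = ⌈(R / τ + 3) / 2⌉ - 1)
    (h : ℝ → ℂ) (hhm : Measurable h) (Ch : ℝ) (hhb : ∀ u : ℝ, ‖h u‖ ≤ Ch)
    (hhs : ∀ u : ℝ, R / 2 ≤ |u| → h u = 0)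
    (hH : ∀ k ∈ K,
      (∫ u : ℝ, h u * Complex.exp (-(2 * π * Complex.I * k * u / τ))) ≠ 0)
    (b : ℤ → ℂ) (hb : ∀ k ∈ K, b k ≠ 0)
    (g : ℝ → ℂ)
    (hg : ∀ u : ℝ, g u =
      if u ∈ Set.Icc (-(τ / 2)) (τ / 2) then
        ∑ k ∈ K, b k * Complex.exp (2 * π * Complex.I * k * u / τ)
      else 0)
    (gr : ℝ → ℂ) (hgr : ∀ u : ℝ, gr u = ∑ m ∈ Finset.Icc (-r) r, g (u + m * τ))
    (N : ℕ) (hN : M ≤ N) (T : ℝ) (hT : 0 < T) (hNT : ((N : ℝ) - 1) * T < τ)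
    (L₁ L₂ : ℕ) (hL₁ : L₁ ≤ L) (hL₂ : L₂ ≤ L)
    (t₁ : Fin L₁ → ℝ) (a₁ : Fin L₁ → ℂ)
    (t₂ : Fin L₂ → ℝ) (a₂ : Fin L₂ → ℂ)
    (ht₁ : ∀ l, t₁ l ∈ Set.Ico 0 τ) (ht₁' : Function.Injective t₁)
    (ha₁ : ∀ l, a₁ l ≠ 0)
    (ht₂ : ∀ l, t₂ l ∈ Set.Ico 0 τ) (ht₂' : Function.Injective t₂)
    (ha₂ : ∀ l, a₂ l ≠ 0)
    (hsamples : ∀ n : ℕ, n < N →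
      (∫ u : ℝ, (starRingEnd ℂ) (gr (u - n * T)) * finiteStream h t₁ a₁ u) =
      (∫ u : ℝ, (starRingEnd ℂ) (gr (u - n * T)) * finiteStream h t₂ a₂ u)) :
    L₁ = L₂ ∧
    (∃ σ : Fin L₁ ≃ Fin L₂, ∀ l, t₂ (σ l) = t₁ l ∧ a₂ (σ l) = a₁ l) ∧
    (∀ u : ℝ, finiteStream h t₁ a₁ u = finiteStream h t₂ a₂ u) := by
  have hπ : (0:ℝ) < π := pi_pos
  set H : ℤ → ℂ := fun k => ∫ u : ℝ, h u * Complex.exp (-(2 * π * Complex.I * k * u / τ))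
    with hHdef
  have hint : Integrable h := pulse_integrable hhm hhb hhs
  -- measurability and boundedness of g, gr
  have hgmeas : Measurable g := by
    have hge : g = fun u => if u ∈ Set.Icc (-(τ / 2)) (τ / 2) then
        ∑ k ∈ K, b k * Complex.exp (2 * π * Complex.I * k * u / τ) else 0 := funext hg
    rw [hge]
    refine Measurable.ite measurableSet_Icc ?_ measurable_const
    refine Continuous.measurable ?_
    refine continuous_finset_sum _ fun k _ => continuous_const.mul ?_
    exact Complex.continuous_exp.comp (by fun_prop)
  set B : ℝ := ∑ k ∈ K, ‖b k‖ with hBdef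
  have hgbd : ∀ u : ℝ, ‖g u‖ ≤ B := by
    intro u
    rw [hg]
    split
    · refine (norm_sum_le _ _).trans ?_
      refine Finset.sum_le_sum fun k _ => ?_
      have e : (2 * (π:ℂ) * Complex.I * k * u / τ) = ((2*π*k*u/τ : ℝ):ℂ) * Complex.I := by
        push_cast; ring
      rw [norm_mul, e, norm_exp_mul_I, mul_one]
    · rw [norm_zero]
      exact Finset.sum_nonneg fun k _ => norm_nonneg _
  have hgrmeas : Measurable gr := by
    have hge : gr = fun u => ∑ m ∈ Finset.Icc (-r) r, g (u + m * τ) := funext hgr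
    rw [hge]
    exact Finset.measurable_sum _ fun m _ => hgmeas.comp (measurable_id.add_const _)
  set C : ℝ := ((Finset.Icc (-r) r).card : ℝ) * B with hCdef
  have hgrbd : ∀ u : ℝ, ‖gr u‖ ≤ C := by
    intro u
    rw [hgr]
    refine (norm_sum_le _ _).trans ?_
    calc ∑ m ∈ Finset.Icc (-r) r, ‖g (u + m * τ)‖
        ≤ ∑ _m ∈ Finset.Icc (-r) r, B := Finset.sum_le_sum fun m _ => hgbd _
      _ = C := by rw [Finset.sum_const, nsmul_eq_mul]
  -- integrability of the sample integrand terms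
  have hterm_int : ∀ (c t₀ : ℝ),
      Integrable (fun u : ℝ => (starRingEnd ℂ) (gr (u - c)) * h (u - t₀)) := by
    intro c t₀
    have h1 : Integrable (fun u : ℝ => h (u - t₀)) := hint.comp_sub_right t₀
    refine h1.bdd_mul ?_ (c := C) (Filter.Eventually.of_forall fun u => ?_)
    · exact (continuous_star.measurable.comp
        (hgrmeas.comp (measurable_id.sub_const c))).aestronglyMeasurable
    · calc ‖(starRingEnd ℂ) (gr (u - c))‖ = ‖gr (u - c)‖ := RCLike.norm_conj _
        _ ≤ C := hgrbd _
  -- the sample formula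
  have hsample_eq : ∀ (n : ℕ), n < N → ∀ (Lj : ℕ) (tj : Fin Lj → ℝ) (aj : Fin Lj → ℂ),
      (∀ l, tj l ∈ Set.Ico 0 τ) →
      (∫ u : ℝ, (starRingEnd ℂ) (gr (u - n * T)) * finiteStream h tj aj u)
        = ∑ k ∈ K, ((starRingEnd ℂ) (b k) * H k
              * Complex.exp (((2*π*k*(n*T)/τ : ℝ):ℂ) * Complex.I))
            * (∑ l, aj l * Complex.exp (((-(2*π*k*(tj l)/τ) : ℝ):ℂ) * Complex.I)) := by
    intro n hn Lj tj aj htj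
    have hnT0 : (0:ℝ) ≤ (n:ℝ) * T := by positivity
    have hnT1 : (n:ℝ) * T < τ := by
      have hcast : (n:ℝ) ≤ (N:ℝ) - 1 := by
        have : (n:ℝ) + 1 ≤ N := by exact_mod_cast hn
        linarith
      have := mul_le_mul_of_nonneg_right hcast hT.le
      linarith
    have hstep1 : (∫ u : ℝ, (starRingEnd ℂ) (gr (u - n * T)) * finiteStream h tj aj u)
        = ∑ l, aj l * ∫ u : ℝ, (starRingEnd ℂ) (gr (u - n * T)) * h (u - tj l) := by
      have hpt : ∀ u : ℝ, (starRingEnd ℂ) (gr (u - n * T)) * finiteStream h tj aj u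
          = ∑ l, aj l * ((starRingEnd ℂ) (gr (u - n * T)) * h (u - tj l)) := by
        intro u
        show _ * (∑ l, aj l * h (u - tj l)) = _
        rw [Finset.mul_sum]
        exact Finset.sum_congr rfl fun l _ => by ring
      simp only [hpt]
      rw [integral_finset_sum _ fun l _ => (hterm_int _ _).const_mul _]
      exact Finset.sum_congr rfl fun l _ => integral_const_mul _ _
    have hshift : ∀ l, (∫ u : ℝ, (starRingEnd ℂ) (gr (u - n * T)) * h (u - tj l))
        = ∫ v : ℝ, (starRingEnd ℂ) (gr (v + (tj l - n * T))) * h v := by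
      intro l
      calc (∫ u : ℝ, (starRingEnd ℂ) (gr (u - n * T)) * h (u - tj l))
          = ∫ v : ℝ, (starRingEnd ℂ) (gr (v + tj l - n * T)) * h (v + tj l - tj l) :=
            (integral_add_right_eq_self
              (fun u : ℝ => (starRingEnd ℂ) (gr (u - n * T)) * h (u - tj l)) (tj l)).symm
        _ = ∫ v : ℝ, (starRingEnd ℂ) (gr (v + (tj l - n * T))) * h v := by
            refine integral_congr_ae (Filter.Eventually.of_forall fun v => ?_)
            have e1 : v + tj l - n * T = v + (tj l - n * T) := by ring
            have e2 : v + tj l - tj l = v := by ring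
            simp only [e1, e2]
    have hs : ∀ l, |tj l - n * T| < τ := by
      intro l
      obtain ⟨h0, h1⟩ := htj l
      rw [abs_lt]
      constructor <;> linarith
    have hform : ∀ l, (∫ v : ℝ, (starRingEnd ℂ) (gr (v + (tj l - n * T))) * h v)
        = ∑ k ∈ K, (starRingEnd ℂ) (b k)
            * Complex.exp (((-(2*π*k*(tj l - n * T)/τ) : ℝ):ℂ) * Complex.I) * H k :=
      fun l => filter_integral τ R hτ K r hr b h hhm Ch hhb hhs g gr hg hgr _ (hs l)
    rw [hstep1]
    have hterm : ∀ l, aj l * ∫ u : ℝ, (starRingEnd ℂ) (gr (u - n * T)) * h (u - tj l)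
        = ∑ k ∈ K, ((starRingEnd ℂ) (b k) * H k
              * Complex.exp (((2*π*k*(n*T)/τ : ℝ):ℂ) * Complex.I))
            * (aj l * Complex.exp (((-(2*π*k*(tj l)/τ) : ℝ):ℂ) * Complex.I)) := by
      intro l
      rw [hshift l, hform l, Finset.mul_sum]
      refine Finset.sum_congr rfl fun k _ => ?_
      have esplit : Complex.exp (((-(2*π*k*(tj l - n * T)/τ) : ℝ):ℂ) * Complex.I)
          = Complex.exp (((2*π*k*(n*T)/τ : ℝ):ℂ) * Complex.I)
            * Complex.exp (((-(2*π*k*(tj l)/τ) : ℝ):ℂ) * Complex.I) := by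
        rw [exp_mul_I_add]
        congr 2
        ring
      rw [esplit]
      ring
    rw [Finset.sum_congr rfl fun l _ => hterm l, Finset.sum_comm]
    exact Finset.sum_congr rfl fun k _ => by rw [← Finset.mul_sum]
  -- Vandermonde step 1: equality of the Fourier-type sums v₁ k = v₂ k on K
  have hcardK : K.card = M := by
    rw [hK, Int.card_Icc]
    omega
  have hML : (2:ℝ) ≤ (M:ℝ) := by
    have : 2 ≤ M := le_trans (by omega) hM
    exact_mod_cast this
  have hv : ∀ k ∈ K,
      (∑ l, a₁ l * Complex.exp (((-(2*π*k*(t₁ l)/τ) : ℝ):ℂ) * Complex.I))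
        = ∑ l, a₂ l * Complex.exp (((-(2*π*k*(t₂ l)/τ) : ℝ):ℂ) * Complex.I) := by
    have hinj : Set.InjOn (fun k : ℤ => Complex.exp (((2*π*k*T/τ : ℝ):ℂ) * Complex.I)) K := by
      intro k hk k' hk' heq
      simp only [hK, Finset.coe_Icc, Set.mem_Icc] at hk hk'
      have hd1 : (k:ℝ) - k' ≤ (M:ℝ) - 1 := by
        have h' : k - k' ≤ (M:ℤ) - 1 := by omega
        have h'' : ((k - k' : ℤ) : ℝ) ≤ (((M:ℤ) - 1 : ℤ) : ℝ) := by exact_mod_cast h'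
        push_cast at h''
        linarith
      have hd2 : -((M:ℝ) - 1) ≤ (k:ℝ) - k' := by
        have h' : -((M:ℤ) - 1) ≤ k - k' := by omega
        have h'' : ((-((M:ℤ) - 1) : ℤ) : ℝ) ≤ ((k - k' : ℤ) : ℝ) := by exact_mod_cast h'
        push_cast at h''
        linarith
      have hdk : |(k:ℝ) - k'| ≤ (M:ℝ) - 1 := abs_le.2 ⟨hd2, hd1⟩
      have hMN : ((M:ℝ) - 1) * T < τ := by
        have hcast : (M:ℝ) - 1 ≤ (N:ℝ) - 1 := by
          have : (M:ℝ) ≤ N := by exact_mod_cast hN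
          linarith
        nlinarith
      have hpos : (0:ℝ) < 2*π*T/τ := by positivity
      have hb1 : |2*π*(k:ℝ)*T/τ - 2*π*(k':ℝ)*T/τ| < 2*π := by
        have e : 2*π*(k:ℝ)*T/τ - 2*π*(k':ℝ)*T/τ = (2*π*T/τ) * ((k:ℝ) - k') := by ring
        rw [e, abs_mul, abs_of_pos hpos]
        calc (2*π*T/τ) * |(k:ℝ) - k'| ≤ (2*π*T/τ) * ((M:ℝ) - 1) :=
              mul_le_mul_of_nonneg_left hdk hpos.le
          _ < 2*π := by
              rw [div_mul_eq_mul_div, div_lt_iff₀ hτ]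
              nlinarith
      have key := exp_real_mul_I_inj hb1 heq
      have h2 : (2*π*T/τ) * (k:ℝ) = (2*π*T/τ) * (k':ℝ) := by linear_combination key
      have : (k:ℝ) = k' := mul_left_cancel₀ hpos.ne' h2
      exact_mod_cast this
    have hzero := vandermonde_kernel K (fun k : ℤ => Complex.exp (((2*π*k*T/τ : ℝ):ℂ) * Complex.I))
      hinj (fun k => (starRingEnd ℂ) (b k) * H k
        * ((∑ l, a₁ l * Complex.exp (((-(2*π*k*(t₁ l)/τ) : ℝ):ℂ) * Complex.I))
          - ∑ l, a₂ l * Complex.exp (((-(2*π*k*(t₂ l)/τ) : ℝ):ℂ) * Complex.I)))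
      ?_
    · intro k hk
      have := hzero k hk
      have hbk : (starRingEnd ℂ) (b k) ≠ 0 := by
        intro hc
        apply hb k hk
        simpa using congrArg (starRingEnd ℂ) hc
      have hHk : H k ≠ 0 := hH k hk
      rcases mul_eq_zero.1 this with h' | h'
      · rcases mul_eq_zero.1 h' with h'' | h''
        · exact absurd h'' hbk
        · exact absurd h'' hHk
      · exact sub_eq_zero.1 h'
    · intro n hn
      rw [hcardK] at hn
      have hnN : n < N := lt_of_lt_of_le hn hN
      have hpow : ∀ k : ℤ, (Complex.exp (((2*π*k*T/τ : ℝ):ℂ) * Complex.I)) ^ n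
          = Complex.exp (((2*π*k*(n*T)/τ : ℝ):ℂ) * Complex.I) := by
        intro k
        rw [exp_mul_I_pow]
        congr 2
        push_cast
        ring
      have he := hsamples n hnN
      rw [hsample_eq n hnN L₁ t₁ a₁ ht₁, hsample_eq n hnN L₂ t₂ a₂ ht₂] at he
      calc (∑ k ∈ K, ((starRingEnd ℂ) (b k) * H k
              * ((∑ l, a₁ l * Complex.exp (((-(2*π*k*(t₁ l)/τ) : ℝ):ℂ) * Complex.I))
                - ∑ l, a₂ l * Complex.exp (((-(2*π*k*(t₂ l)/τ) : ℝ):ℂ) * Complex.I)))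
              * (Complex.exp (((2*π*k*T/τ : ℝ):ℂ) * Complex.I)) ^ n)
          = (∑ k ∈ K, ((starRingEnd ℂ) (b k) * H k
                * Complex.exp (((2*π*k*(n*T)/τ : ℝ):ℂ) * Complex.I))
              * (∑ l, a₁ l * Complex.exp (((-(2*π*k*(t₁ l)/τ) : ℝ):ℂ) * Complex.I)))
            - ∑ k ∈ K, ((starRingEnd ℂ) (b k) * H k
                * Complex.exp (((2*π*k*(n*T)/τ : ℝ):ℂ) * Complex.I))
              * (∑ l, a₂ l * Complex.exp (((-(2*π*k*(t₂ l)/τ) : ℝ):ℂ) * Complex.I)) := by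
            rw [← Finset.sum_sub_distrib]
            refine Finset.sum_congr rfl fun k _ => ?_
            rw [hpow k]
            ring
        _ = 0 := by rw [← he, sub_self]
  -- matching step
  have hmatch₁ : ∀ l : Fin L₁, ∃ l' : Fin L₂, t₂ l' = t₁ l ∧ a₂ l' = a₁ l :=
    prony_exists τ hτ M k₀ K hK L₁ L₂ (by omega) t₁ a₁ t₂ a₂ ht₁ ht₁' ha₁ ht₂ ht₂' hv
  have hmatch₂ : ∀ l' : Fin L₂, ∃ l : Fin L₁, t₁ l = t₂ l' ∧ a₁ l = a₂ l' :=
    prony_exists τ hτ M k₀ K hK L₂ L₁ (by omega) t₂ a₂ t₁ a₁ ht₂ ht₂' ha₂ ht₁ ht₁'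
      (fun k hk => (hv k hk).symm)
  choose σf hσt hσa using hmatch₁
  choose ρf hρt hρa using hmatch₂
  have hlr : ∀ l, ρf (σf l) = l := fun l => ht₁' (by rw [hρt, hσt])
  have hrl : ∀ l', σf (ρf l') = l' := fun l' => ht₂' (by rw [hσt, hρt])
  let σ : Fin L₁ ≃ Fin L₂ := ⟨σf, ρf, hlr, hrl⟩
  have hcard : L₁ = L₂ := by
    have := Fintype.card_congr σ
    simpa using this
  refine ⟨hcard, ⟨σ, fun l => ⟨hσt l, hσa l⟩⟩, fun u => ?_⟩
  show (∑ l, a₁ l * h (u - t₁ l)) = ∑ l, a₂ l * h (u - t₂ l)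
  refine Fintype.sum_equiv σ _ _ fun l => ?_
  show a₁ l * h (u - t₁ l) = a₂ (σf l) * h (u - t₂ (σf l))
  rw [hσt, hσa]
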